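/- Let F be a cumulative distribution function supported on [0,∞) with hazard rate h on [t₀,∞) satisfying condition (BasicH). Assume h is regularly varying of negative index and that F is subexponential. Let M > 0 and let K be a cumulative distribution function in B(F,M). If g is a measurable function with g(t)/(h(t)^m·F̄(t)) → 0 as t → ∞, then T_K g(t)/(h(t)^m·F̄(t)) → 0 as t → ∞. -/

import Mathlib

open MeasureTheory Filter Set
open scoped ENNReal

noncomputable section

/-- `h` is a hazard rate for the upper tail of `F` on `[t₀, ∞)`:
`F̄(t₀) > 0`, `h` is nonnegative and locally integrable on `[t₀, ∞)`, and
`F̄(t) = F̄(t₀) · exp(−∫_{t₀}^t h(u) du)` for all `t ≥ t₀`. -/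
def HasHazardRate (F h : ℝ → ℝ) (t₀ : ℝ) : Prop :=
  0 < 1 - F t₀ ∧ (∀ t, t₀ ≤ t → 0 ≤ h t) ∧
    MeasureTheory.LocallyIntegrableOn h (Set.Ici t₀) ∧
    ∀ t, t₀ ≤ t → 1 - F t = (1 - F t₀) * Real.exp (-(∫ u in t₀..t, h u))

/-- `g`, positive on a neighborhood of `∞`, is regularly varying of index `ρ`:
for every `a > 0`, `g(at)/g(t) → a^ρ` as `t → ∞`. -/
def RegularlyVarying (g : ℝ → ℝ) (ρ : ℝ) : Prop :=
  (∀ᶠ t in Filter.atTop, 0 < g t) ∧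
    ∀ a : ℝ, 0 < a →
      Filter.Tendsto (fun t => g (a * t) / g t) Filter.atTop (nhds (a ^ ρ))

/-- `g` is smoothly varying of index `α` and order `m`: `g` is `m` times continuously
differentiable on a neighborhood of `∞` and `g^(m)` is regularly varying of index `α − m`. -/
def SmoothlyVarying (g : ℝ → ℝ) (α : ℝ) (m : ℕ) : Prop :=
  (∃ T : ℝ, ContDiffOn ℝ (m : ℕ∞) g (Set.Ici T)) ∧
    RegularlyVarying (iteratedDeriv m g) (α - m)

/-- Condition (BasicH): `h` is regularly varying of some index, `t·h(t) → ∞`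
and `h(t) → 0` as `t → ∞`. -/
def BasicH (h : ℝ → ℝ) : Prop :=
  (∃ ρ : ℝ, RegularlyVarying h ρ) ∧
    Filter.Tendsto (fun t => t * h t) Filter.atTop Filter.atTop ∧
    Filter.Tendsto h Filter.atTop (nhds 0)

/-- `F` is a cumulative distribution function on `ℝ`. -/
def IsCDF (F : ℝ → ℝ) : Prop :=
  Monotone F ∧ (∀ x, ContinuousWithinAt F (Set.Ici x) x) ∧
    Filter.Tendsto F Filter.atBot (nhds 0) ∧ Filter.Tendsto F Filter.atTop (nhds 1)

/-- `K` (a probability measure on `ℝ`) belongs to `B(F,M)`: both `K̄(t)` and `K(−t)` are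
bounded by `M·F̄(t)` for all `t ≥ 0`. Here `F̄ = 1 − F`. -/
def MemB (F : ℝ → ℝ) (M : ℝ) (μK : Measure ℝ) : Prop :=
  ∀ t : ℝ, 0 ≤ t → (μK (Set.Ioi t)).toReal ≤ M * (1 - F t) ∧
    (μK (Set.Iic (-t))).toReal ≤ M * (1 - F t)

/-- The operator `T_K` (written `Tops`): `T_K f(t) = ∫_{(−∞,t/2]} f(t−x) dK(x)`. -/
def Tops (μK : Measure ℝ) (f : ℝ → ℝ) : ℝ → ℝ :=
  fun t => ∫ x in Set.Iic (t / 2), f (t - x) ∂μK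

lemma uct_core (h h₀ : ℝ → ℝ) {ρ : ℝ} (hρ : ρ < 0) (hrv : RegularlyVarying h ρ)
    (t₀ : ℝ) (hh₀ : StronglyMeasurable h₀)
    (hae : volume ({x | h x ≠ h₀ x} ∩ Ici t₀) = 0)
    (t l : ℕ → ℝ) (ht1 : ∀ n, max 1 t₀ ≤ t n)
    (htop : Tendsto t atTop atTop) (hl : ∀ n, l n ∈ Icc (1:ℝ) 3) :
    ∀ᶠ n in atTop, h (l n * t n) ≤ (4 / (6:ℝ) ^ ρ) * h (t n) ∧
      h (t n) ≤ (4 / (6:ℝ) ^ ρ) * h (l n * t n) := by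
  set β : ℝ := (6:ℝ) ^ ρ with hβ
  have hβ0 : 0 < β := Real.rpow_pos_of_pos (by norm_num) ρ
  have hβ1 : β ≤ 1 := Real.rpow_le_one_of_one_le_of_nonpos (by norm_num) hρ.le
  -- sequences
  have htpos : ∀ n, 0 < t n := fun n => lt_of_lt_of_le one_pos ((le_max_left _ _).trans (ht1 n))
  have hlpos : ∀ n, 0 < l n := fun n => lt_of_lt_of_le one_pos (hl n).1
  set s : ℕ → ℝ := fun n => l n * t n with hs
  have hts : ∀ n, t n ≤ s n := fun n =>
    le_mul_of_one_le_left (htpos n).le (hl n).1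
  have hspos : ∀ n, 0 < s n := fun n => lt_of_lt_of_le (htpos n) (hts n)
  have hs1 : ∀ n, max 1 t₀ ≤ s n := fun n => (ht1 n).trans (hts n)
  have hstop : Tendsto s atTop atTop := tendsto_atTop_mono hts htop
  -- null sets
  set N : Set ℝ := toMeasurable volume ({x | h x ≠ h₀ x} ∩ Ici t₀) with hN
  have hNmeas : MeasurableSet N := measurableSet_toMeasurable _ _
  have hNnull : volume N = 0 := by rw [hN, measure_toMeasurable]; exact hae
  have hagree : ∀ x, t₀ ≤ x → x ∉ N → h x = h₀ x := by
    intro x hx hxN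
    by_contra hne
    exact hxN (subset_toMeasurable _ _ ⟨hne, hx⟩)
  set Z : Set ℝ := (⋃ n, (· * t n) ⁻¹' N) ∪ (⋃ n, (· * s n) ⁻¹' N) with hZ
  have hZnull : volume Z = 0 := by
    have k1 : ∀ (c : ℝ), 0 < c → volume ((· * c) ⁻¹' N) = 0 := by
      intro c hc
      rw [Real.volume_preimage_mul_right (ne_of_gt hc), hNnull, mul_zero]
    refine measure_union_null ?_ ?_
    · exact measure_iUnion_null fun n => k1 _ (htpos n)
    · exact measure_iUnion_null fun n => k1 _ (hspos n)
  set ZM : Set ℝ := toMeasurable volume Z with hZM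
  have hZMmeas : MeasurableSet ZM := measurableSet_toMeasurable _ _
  have hZMnull : volume ZM = 0 := by rw [hZM, measure_toMeasurable]; exact hZnull
  have hZZM : Z ⊆ ZM := subset_toMeasurable _ _
  -- the functions
  set G : ℝ → ℝ := fun x => Real.exp (Real.log x * ρ) with hG
  have hGsm : StronglyMeasurable G :=
    (Real.measurable_exp.comp (Real.measurable_log.mul measurable_const)).stronglyMeasurable
  have hGeq : ∀ x : ℝ, 0 < x → G x = x ^ ρ := fun x hx => (Real.rpow_def_of_pos hx ρ).symm
  set f : ℕ → ℝ → ℝ := fun n x => h₀ (x * t n) / h (t n) with hf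
  set f' : ℕ → ℝ → ℝ := fun n x => h₀ (x * s n) / h (s n) with hf'
  have hfsm : ∀ n, StronglyMeasurable (f n) := fun n =>
    ((hh₀.measurable.comp (measurable_mul_const (t n))).div_const _).stronglyMeasurable
  have hf'sm : ∀ n, StronglyMeasurable (f' n) := fun n =>
    ((hh₀.measurable.comp (measurable_mul_const (s n))).div_const _).stronglyMeasurable
  -- pointwise convergence off Z
  have hconv : ∀ (u : ℕ → ℝ), (∀ n, max 1 t₀ ≤ u n) → Tendsto u atTop atTop →
      ∀ x : ℝ, 1 ≤ x → (∀ n, x * u n ∉ N) →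
      Tendsto (fun n => h₀ (x * u n) / h (u n)) atTop (nhds (G x)) := by
    intro u hu1 hutop x hx hxN
    have hx0 : 0 < x := lt_of_lt_of_le one_pos hx
    have heq : (fun n => h₀ (x * u n) / h (u n)) = fun n => h (x * u n) / h (u n) := by
      funext n
      have hxu : t₀ ≤ x * u n := by
        have h1 : (1:ℝ) ≤ u n := (le_max_left _ _).trans (hu1 n)
        have h2 : t₀ ≤ u n := (le_max_right _ _).trans (hu1 n)
        nlinarith
      rw [hagree _ hxu (hxN n)]
    rw [heq, hGeq x hx0]
    exact (hrv.2 x hx0).comp hutop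
  -- Egorov applications
  have hvol6 : volume (Icc (1:ℝ) 6) ≠ ⊤ := by
    rw [Real.volume_Icc]; exact ENNReal.ofReal_ne_top
  have hvol2 : volume (Icc (1:ℝ) 2) ≠ ⊤ := by
    rw [Real.volume_Icc]; exact ENNReal.ofReal_ne_top
  have hae1 : ∀ᵐ x ∂(volume : Measure ℝ), x ∈ Icc (1:ℝ) 6 →
      Tendsto (fun n => f n x) atTop (nhds (G x)) := by
    rw [ae_iff]
    refine measure_mono_null ?_ hZnull
    intro x hx
    simp only [mem_setOf_eq] at hx
    by_contra hxZ
    refine hx fun hmem => ?_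
    have hxN : ∀ n, x * t n ∉ N := fun n => fun hc =>
      hxZ (Or.inl (mem_iUnion.2 ⟨n, hc⟩))
    exact hconv t ht1 htop x hmem.1 hxN
  have hae2 : ∀ᵐ x ∂(volume : Measure ℝ), x ∈ Icc (1:ℝ) 2 →
      Tendsto (fun n => f' n x) atTop (nhds (G x)) := by
    rw [ae_iff]
    refine measure_mono_null ?_ hZnull
    intro x hx
    simp only [mem_setOf_eq] at hx
    by_contra hxZ
    refine hx fun hmem => ?_
    have hxN : ∀ n, x * s n ∉ N := fun n => fun hc =>
      hxZ (Or.inr (mem_iUnion.2 ⟨n, hc⟩))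
    exact hconv s hs1 hstop x hmem.1 hxN
  obtain ⟨tb₁, htb₁sub, htb₁meas, htb₁vol, hunif₁⟩ :=
    tendstoUniformlyOn_of_ae_tendsto hfsm hGsm measurableSet_Icc hvol6 hae1
      (ε := 1/4) (by norm_num)
  obtain ⟨tb₂, htb₂sub, htb₂meas, htb₂vol, hunif₂⟩ :=
    tendstoUniformlyOn_of_ae_tendsto hf'sm hGsm measurableSet_Icc hvol2 hae2
      (ε := 1/4) (by norm_num)
  rw [Metric.tendstoUniformlyOn_iff] at hunif₁ hunif₂
  have hβ20 : 0 < β / 2 := by linarith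
  have hpos := hrv.1
  rw [eventually_atTop] at hpos
  obtain ⟨Tp, hTp⟩ := hpos
  filter_upwards [hunif₁ (β/2) hβ20, hunif₂ (β/2) hβ20,
    htop.eventually_ge_atTop Tp, hstop.eventually_ge_atTop Tp] with n hn1 hn2 htn hsn
  have hltn0 : h (t n) > 0 := hTp _ htn
  have hlsn0 : h (s n) > 0 := hTp _ hsn
  have hln0 : (l n : ℝ) ≠ 0 := (hlpos n).ne'
  set A : Set ℝ := (Icc (1:ℝ) 6 \ tb₁) \ ZM with hA
  set E₂ : Set ℝ := (Icc (1:ℝ) 2 \ tb₂) \ ZM with hE₂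
  set B : Set ℝ := (fun y => (l n)⁻¹ * y) ⁻¹' E₂ with hB
  have hE₂meas : MeasurableSet E₂ := (measurableSet_Icc.diff htb₂meas).diff hZMmeas
  have hBmeas : MeasurableSet B := hE₂meas.preimage (measurable_const_mul _)
  -- measure lower bounds
  have hcov1 : Icc (1:ℝ) 6 ⊆ A ∪ (tb₁ ∪ ZM) := by
    intro x hx
    by_cases h1 : x ∈ tb₁
    · exact Or.inr (Or.inl h1)
    by_cases h2 : x ∈ ZM
    · exact Or.inr (Or.inr h2)
    · exact Or.inl ⟨⟨hx, h1⟩, h2⟩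
  have hcov2 : Icc (1:ℝ) 2 ⊆ E₂ ∪ (tb₂ ∪ ZM) := by
    intro x hx
    by_cases h1 : x ∈ tb₂
    · exact Or.inr (Or.inl h1)
    by_cases h2 : x ∈ ZM
    · exact Or.inr (Or.inr h2)
    · exact Or.inl ⟨⟨hx, h1⟩, h2⟩
  have h5 : ENNReal.ofReal 5 ≤ volume A + ENNReal.ofReal (1/4) := by
    calc ENNReal.ofReal 5 = volume (Icc (1:ℝ) 6) := by
          rw [Real.volume_Icc]; norm_num
    _ ≤ volume (A ∪ (tb₁ ∪ ZM)) := measure_mono hcov1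
    _ ≤ volume A + (volume tb₁ + volume ZM) :=
        (measure_union_le _ _).trans (add_le_add le_rfl (measure_union_le _ _))
    _ ≤ volume A + ENNReal.ofReal (1/4) :=
        add_le_add le_rfl (by rw [hZMnull, add_zero]; exact htb₁vol)
  have hE₂ge : ENNReal.ofReal (3/4) ≤ volume E₂ := by
    have h1 : ENNReal.ofReal 1 ≤ volume E₂ + ENNReal.ofReal (1/4) := by
      calc ENNReal.ofReal 1 = volume (Icc (1:ℝ) 2) := by
            rw [Real.volume_Icc]; norm_num
      _ ≤ volume (E₂ ∪ (tb₂ ∪ ZM)) := measure_mono hcov2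
      _ ≤ volume E₂ + (volume tb₂ + volume ZM) :=
          (measure_union_le _ _).trans (add_le_add le_rfl (measure_union_le _ _))
      _ ≤ volume E₂ + ENNReal.ofReal (1/4) :=
          add_le_add le_rfl (by rw [hZMnull, add_zero]; exact htb₂vol)
    have : ENNReal.ofReal 1 - ENNReal.ofReal (1/4) ≤ volume E₂ := tsub_le_iff_right.mpr h1
    rwa [← ENNReal.ofReal_sub _ (by norm_num : (0:ℝ) ≤ 1/4),
      show (1:ℝ) - 1/4 = 3/4 by norm_num] at this
  have hBvol : volume B = ENNReal.ofReal (l n) * volume E₂ := by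
    rw [hB, Real.volume_preimage_mul_left (inv_ne_zero hln0), inv_inv,
      abs_of_pos (hlpos n)]
  have hBge : ENNReal.ofReal (3/4) ≤ volume B := by
    rw [hBvol]
    calc ENNReal.ofReal (3/4) = 1 * ENNReal.ofReal (3/4) := (one_mul _).symm
    _ ≤ ENNReal.ofReal (l n) * volume E₂ :=
        mul_le_mul' (ENNReal.one_le_ofReal.2 (hl n).1) hE₂ge
  have hBsub : B ⊆ Icc (1:ℝ) 6 := by
    intro y hy
    have hy1 : (1:ℝ) ≤ (l n)⁻¹ * y := hy.1.1.1
    have hy2 : (l n)⁻¹ * y ≤ 2 := hy.1.1.2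
    have hlp := hlpos n
    have h3 := (hl n).2
    have h1l := (hl n).1
    have hyy : l n * ((l n)⁻¹ * y) = y := by field_simp
    constructor
    · have hh1 := mul_le_mul_of_nonneg_left hy1 hlp.le
      rw [mul_one, hyy] at hh1
      linarith
    · have hh2 := mul_le_mul_of_nonneg_left hy2 hlp.le
      rw [hyy] at hh2
      linarith
  -- A ∩ B nonempty
  have hABne : (A ∩ B).Nonempty := by
    by_contra hne
    rw [Set.not_nonempty_iff_eq_empty] at hne
    have hd : Disjoint A B := Set.disjoint_iff_inter_eq_empty.mpr hne
    have hsub : A ∪ B ⊆ Icc (1:ℝ) 6 := union_subset (fun x hx => hx.1.1) hBsub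
    have hle : volume A + volume B ≤ ENNReal.ofReal 5 := by
      rw [← measure_union hd hBmeas]
      exact (measure_mono hsub).trans_eq
        (by rw [Real.volume_Icc]; norm_num)
    have hfin : (ENNReal.ofReal 5) ≠ ⊤ := ENNReal.ofReal_ne_top
    have : ENNReal.ofReal 5 + volume B ≤ ENNReal.ofReal 5 + ENNReal.ofReal (1/4) := by
      calc ENNReal.ofReal 5 + volume B ≤ (volume A + ENNReal.ofReal (1/4)) + volume B :=
            add_le_add h5 le_rfl
      _ = (volume A + volume B) + ENNReal.ofReal (1/4) := by ring
      _ ≤ ENNReal.ofReal 5 + ENNReal.ofReal (1/4) := add_le_add hle le_rfl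
    have hB14 : volume B ≤ ENNReal.ofReal (1/4) :=
      (ENNReal.add_le_add_iff_left hfin).mp this
    have := hBge.trans hB14
    rw [ENNReal.ofReal_le_ofReal_iff (by norm_num)] at this
    norm_num at this
  obtain ⟨x, hxA, hxB⟩ := hABne
  set y : ℝ := (l n)⁻¹ * x with hy
  have hyE₂ : y ∈ E₂ := hxB
  have hxIcc : x ∈ Icc (1:ℝ) 6 := hxA.1.1
  have hx0 : (0:ℝ) < x := lt_of_lt_of_le one_pos hxIcc.1
  have hy0 : (0:ℝ) < y := lt_of_lt_of_le one_pos hyE₂.1.1.1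
  have hxZ : x ∉ Z := fun hc => hxA.2 (hZZM hc)
  have hyZ : y ∉ Z := fun hc => hyE₂.2 (hZZM hc)
  -- agreement of h and h₀ at the relevant points
  have hxt : h₀ (x * t n) = h (x * t n) := by
    refine (hagree _ ?_ ?_).symm
    · have h1 : (1:ℝ) ≤ t n := (le_max_left _ _).trans (ht1 n)
      have h2 : t₀ ≤ t n := (le_max_right _ _).trans (ht1 n)
      nlinarith [hxIcc.1]
    · exact fun hc => hxZ (Or.inl (mem_iUnion.2 ⟨n, hc⟩))
  have hys : h₀ (y * s n) = h (y * s n) := by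
    refine (hagree _ ?_ ?_).symm
    · have h1 : (1:ℝ) ≤ s n := (le_max_left _ _).trans (hs1 n)
      have h2 : t₀ ≤ s n := (le_max_right _ _).trans (hs1 n)
      nlinarith [hyE₂.1.1.1]
    · exact fun hc => hyZ (Or.inr (mem_iUnion.2 ⟨n, hc⟩))
  have hkey : y * s n = x * t n := by
    rw [hy, hs]
    field_simp
  -- distance bounds
  have hd1 : |h (x * t n) / h (t n) - x ^ ρ| < β / 2 := by
    have := hn1 x ⟨hxIcc, hxA.1.2⟩
    rw [Real.dist_eq] at this
    rw [hf] at this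
    simp only at this
    rw [hxt, hGeq x hx0] at this
    rwa [abs_sub_comm]
  have hd2 : |h (x * t n) / h (s n) - y ^ ρ| < β / 2 := by
    have := hn2 y ⟨hyE₂.1.1, hyE₂.1.2⟩
    rw [Real.dist_eq] at this
    rw [hf'] at this
    simp only at this
    rw [hys, hkey, hGeq y hy0] at this
    rwa [abs_sub_comm]
  -- rpow bounds
  have hxρ1 : x ^ ρ ≤ 1 := Real.rpow_le_one_of_one_le_of_nonpos hxIcc.1 hρ.le
  have hxρβ : β ≤ x ^ ρ := Real.rpow_le_rpow_of_nonpos hx0 hxIcc.2 hρ.le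
  have hyρ1 : y ^ ρ ≤ 1 := Real.rpow_le_one_of_one_le_of_nonpos hyE₂.1.1.1 hρ.le
  have hyρβ : β ≤ y ^ ρ := Real.rpow_le_rpow_of_nonpos hy0
    (hyE₂.1.1.2.trans (by norm_num)) hρ.le
  rw [abs_lt] at hd1 hd2
  have b1 : h (x * t n) ≤ 2 * h (t n) := by
    have h' : h (x * t n) / h (t n) < 2 := by linarith [hd1.2]
    rw [div_lt_iff₀ hltn0] at h'
    linarith
  have b2 : (β / 2) * h (t n) ≤ h (x * t n) := by
    have h' : β / 2 < h (x * t n) / h (t n) := by linarith [hd1.1]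
    have := (lt_div_iff₀ hltn0).mp h'
    linarith
  have b3 : h (x * t n) ≤ 2 * h (s n) := by
    have h' : h (x * t n) / h (s n) < 2 := by linarith [hd2.2]
    rw [div_lt_iff₀ hlsn0] at h'
    linarith
  have b4 : (β / 2) * h (s n) ≤ h (x * t n) := by
    have h' : β / 2 < h (x * t n) / h (s n) := by linarith [hd2.1]
    have := (lt_div_iff₀ hlsn0).mp h'
    linarith
  constructor
  · rw [div_mul_eq_mul_div, le_div_iff₀ hβ0]
    linarith [b4, b1]
  · rw [div_mul_eq_mul_div, le_div_iff₀ hβ0]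
    linarith [b2, b3]


lemma uct_uniform (h h₀ : ℝ → ℝ) {ρ : ℝ} (hρ : ρ < 0) (hrv : RegularlyVarying h ρ)
    (t₀ : ℝ) (hh₀ : StronglyMeasurable h₀)
    (hae : volume ({x | h x ≠ h₀ x} ∩ Ici t₀) = 0) :
    ∃ T : ℝ, ∀ x ≥ T, ∀ l ∈ Icc (1:ℝ) 3,
      h (l * x) ≤ (4 / (6:ℝ) ^ ρ) * h x ∧ h x ≤ (4 / (6:ℝ) ^ ρ) * h (l * x) := by
  by_contra hc
  push_neg at hc
  have hsel : ∀ n : ℕ, ∃ x : ℝ, (max 1 t₀ ⊔ (n:ℝ)) ≤ x ∧ ∃ l ∈ Icc (1:ℝ) 3,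
      ¬(h (l * x) ≤ (4 / (6:ℝ) ^ ρ) * h x ∧ h x ≤ (4 / (6:ℝ) ^ ρ) * h (l * x)) := by
    intro n
    obtain ⟨x, hx, l, hl, hbad⟩ := hc (max 1 t₀ ⊔ (n:ℝ))
    exact ⟨x, hx, l, hl, fun hcon => (hbad hcon.1).not_ge hcon.2⟩
  choose X hX L hL hbad using hsel
  have hX1 : ∀ n, max 1 t₀ ≤ X n := fun n => (le_max_left _ _).trans (hX n)
  have hXtop : Tendsto X atTop atTop :=
    tendsto_atTop_mono (fun n => (le_max_right _ _).trans (hX n))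
      tendsto_natCast_atTop_atTop
  obtain ⟨n, hn⟩ := (uct_core h h₀ hρ hrv t₀ hh₀ hae X L hX1 hXtop hL).exists
  exact hbad n hn

lemma uct_potter (h h₀ : ℝ → ℝ) {ρ : ℝ} (hρ : ρ < 0) (hrv : RegularlyVarying h ρ)
    (t₀ : ℝ) (hh₀ : StronglyMeasurable h₀)
    (hae : volume ({x | h x ≠ h₀ x} ∩ Ici t₀) = 0) :
    ∃ T : ℝ, 0 < T ∧ ∀ x ≥ T, ∀ s, x/2 ≤ s → h s ≤ (4 / (6:ℝ) ^ ρ) * h x := by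
  obtain ⟨Tu, hTu⟩ := uct_uniform h h₀ hρ hrv t₀ hh₀ hae
  have hβ0 : (0:ℝ) < (6:ℝ)^ρ := Real.rpow_pos_of_pos (by norm_num) ρ
  have hβ1 : (6:ℝ)^ρ ≤ 1 := Real.rpow_le_one_of_one_le_of_nonpos (by norm_num) hρ.le
  set C : ℝ := 4 / (6:ℝ)^ρ with hCdef
  have hC1 : (1:ℝ) ≤ C := by rw [hCdef, le_div_iff₀ hβ0]; linarith
  have hC0 : (0:ℝ) < C := lt_of_lt_of_le one_pos hC1
  set q : ℝ := (Real.exp ρ + 1)/2 with hqdef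
  have hexp1 : Real.exp ρ < 1 := Real.exp_lt_one_iff.mpr hρ
  have hq1 : q < 1 := by rw [hqdef]; linarith
  have hq0 : 0 < q := by have := Real.exp_pos ρ; rw [hqdef]; linarith
  have heq : Tendsto (fun x => h (Real.exp 1 * x) / h x) atTop (nhds (Real.exp ρ)) := by
    have := hrv.2 (Real.exp 1) (Real.exp_pos 1)
    rwa [Real.exp_one_rpow] at this
  have hev : ∀ᶠ x in atTop, h (Real.exp 1 * x) / h x < q :=
    heq.eventually_lt_const (by rw [hqdef]; linarith)
  obtain ⟨Tq, hTq⟩ := eventually_atTop.1 hev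
  obtain ⟨Tp, hTp⟩ := eventually_atTop.1 hrv.1
  set T₁ : ℝ := max (max Tu Tq) (max Tp 1) with hT₁def
  have hT₁1 : (1:ℝ) ≤ T₁ := (le_max_right _ _).trans (le_max_right _ _)
  have hT₁Tu : Tu ≤ T₁ := (le_max_left _ _).trans (le_max_left _ _)
  have hT₁Tq : Tq ≤ T₁ := (le_max_right _ _).trans (le_max_left _ _)
  have hT₁Tp : Tp ≤ T₁ := (le_max_left _ _).trans (le_max_right _ _)
  have he1 : (1:ℝ) ≤ Real.exp 1 := by linarith [Real.add_one_le_exp 1]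
  have hchain : ∀ x, T₁ ≤ x → ∀ k : ℕ, h (Real.exp 1 ^ k * x) ≤ h x := by
    intro x hx k
    have hx0 : (0:ℝ) < x := lt_of_lt_of_le one_pos (hT₁1.trans hx)
    have hbase : ∀ j : ℕ, x ≤ Real.exp 1 ^ j * x := fun j =>
      le_mul_of_one_le_left hx0.le (one_le_pow₀ he1)
    have hqk : h (Real.exp 1 ^ k * x) ≤ q^k * h x := by
      induction k with
      | zero => simp
      | succ k ih =>
        have hbq : Tq ≤ Real.exp 1 ^ k * x := (hT₁Tq.trans hx).trans (hbase k)
        have hbp : 0 < h (Real.exp 1 ^ k * x) :=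
          hTp _ ((hT₁Tp.trans hx).trans (hbase k))
        have hstep := hTq _ hbq
        rw [div_lt_iff₀ hbp] at hstep
        have hek : Real.exp 1 ^ (k+1) * x = Real.exp 1 * (Real.exp 1 ^ k * x) := by ring
        rw [hek]
        calc h (Real.exp 1 * (Real.exp 1 ^ k * x)) ≤ q * h (Real.exp 1 ^ k * x) :=
              hstep.le
        _ ≤ q * (q^k * h x) := mul_le_mul_of_nonneg_left ih hq0.le
        _ = q^(k+1) * h x := by ring
    have hhx0 : 0 < h x := hTp _ (hT₁Tp.trans hx)
    calc h (Real.exp 1 ^ k * x) ≤ q^k * h x := hqk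
    _ ≤ 1 * h x := mul_le_mul_of_nonneg_right
        (pow_le_one₀ hq0.le hq1.le) hhx0.le
    _ = h x := one_mul _
  refine ⟨2 * T₁, by linarith, ?_⟩
  intro x hx s hs
  have hxT₁ : T₁ ≤ x := by linarith
  have hx0 : (0:ℝ) < x := lt_of_lt_of_le one_pos (hT₁1.trans hxT₁)
  rcases le_or_gt x s with hle | hlt
  · -- s ≥ x
    set k : ℕ := ⌊Real.log (s/x)⌋₊ with hkdef
    have hs0 : (0:ℝ) < s := lt_of_lt_of_le hx0 hle
    have hsx0 : (0:ℝ) < s / x := div_pos hs0 hx0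
    have hsx1 : (1:ℝ) ≤ s / x := (one_le_div hx0).mpr hle
    have hk1 : Real.exp 1 ^ k ≤ s / x := by
      have hfl : (k:ℝ) ≤ Real.log (s/x) := Nat.floor_le (Real.log_nonneg hsx1)
      calc Real.exp 1 ^ k = Real.exp k := Real.exp_one_pow k
      _ ≤ Real.exp (Real.log (s/x)) := Real.exp_le_exp.mpr hfl
      _ = s/x := Real.exp_log hsx0
    have hk2 : s / x < Real.exp 1 ^ (k+1) := by
      have hfl : Real.log (s/x) < (k:ℝ) + 1 := by
        exact_mod_cast Nat.lt_floor_add_one (Real.log (s/x))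
      calc s/x = Real.exp (Real.log (s/x)) := (Real.exp_log hsx0).symm
      _ < Real.exp ((k:ℝ)+1) := Real.exp_lt_exp.mpr hfl
      _ = Real.exp 1 ^ (k+1) := by
          rw [Real.exp_one_pow]
          norm_num
    set b : ℝ := Real.exp 1 ^ k * x with hbdef
    have hbpow : (0:ℝ) < Real.exp 1 ^ k := pow_pos (Real.exp_pos 1) k
    have hb0 : 0 < b := mul_pos hbpow hx0
    have hbs : b ≤ s := by
      have := mul_le_mul_of_nonneg_right hk1 hx0.le
      rwa [div_mul_cancel₀ _ hx0.ne'] at this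
    set r : ℝ := s / b with hrdef
    have hr1 : 1 ≤ r := (one_le_div hb0).mpr hbs
    have hr3 : r ≤ 3 := by
      have hsb : s < Real.exp 1 * b := by
        have := mul_lt_mul_of_pos_right hk2 hx0
        rw [div_mul_cancel₀ _ hx0.ne'] at this
        calc s < Real.exp 1 ^ (k+1) * x := this
        _ = Real.exp 1 * b := by rw [hbdef]; ring
      have : r < Real.exp 1 := by
        rw [hrdef, div_lt_iff₀ hb0]
        linarith
      have he3 : Real.exp 1 < 3 := by
        have := Real.exp_one_lt_d9
        linarith
      linarith
    have hrs : r * b = s := by rw [hrdef]; field_simp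
    have hbT : Tu ≤ b := (hT₁Tu.trans hxT₁).trans
      (le_mul_of_one_le_left hx0.le (one_le_pow₀ he1))
    have hup := (hTu b hbT r ⟨hr1, hr3⟩).1
    rw [hrs] at hup
    exact hup.trans (mul_le_mul_of_nonneg_left (hchain x hxT₁ k) hC0.le)
  · -- x/2 ≤ s < x
    have hs0 : (0:ℝ) < s := by linarith
    have hsT₁ : T₁ ≤ s := by linarith
    set r : ℝ := x / s with hrdef
    have hr1 : 1 ≤ r := (one_le_div hs0).mpr hlt.le
    have hr3 : r ≤ 3 := by
      rw [hrdef, div_le_iff₀ hs0]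
      linarith
    have hdown := (hTu s (hT₁Tu.trans hsT₁) r ⟨hr1, hr3⟩).2
    have hrx : r * s = x := by rw [hrdef]; field_simp
    rwa [hrx] at hdown

lemma meas_tail (μF : Measure ℝ) : Measurable fun s : ℝ => μF (Ioi s) :=
  Antitone.measurable fun _ _ hab => measure_mono (Ioi_subset_Ioi hab)

lemma tail_eq (μF : Measure ℝ) [IsProbabilityMeasure μF] (t : ℝ) :
    (μF (Ioi t)).toReal = 1 - (μF (Iic t)).toReal := by
  have hc := measure_add_measure_compl (μ := μF) (measurableSet_Iic (a := t))
  rw [compl_Iic] at hc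
  have h1 : μF (Iic t) ≠ ⊤ := measure_ne_top _ _
  have h2 : μF (Ioi t) ≠ ⊤ := measure_ne_top _ _
  have := congrArg ENNReal.toReal hc
  rw [ENNReal.toReal_add h1 h2, measure_univ, ENNReal.toReal_one] at this
  linarith

lemma tail_conv_eq (μF : Measure ℝ) [IsProbabilityMeasure μF] (t : ℝ) :
    (Measure.map (fun p : ℝ × ℝ => p.1 + p.2) (μF.prod μF)) (Ioi t)
      = ∫⁻ y, μF (Ioi (t - y)) ∂μF := by
  have hadd : Measurable fun p : ℝ × ℝ => p.1 + p.2 := measurable_fst.add measurable_snd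
  rw [Measure.map_apply hadd measurableSet_Ioi]
  have hS : MeasurableSet ((fun p : ℝ × ℝ => p.1 + p.2) ⁻¹' Ioi t) :=
    hadd measurableSet_Ioi
  rw [Measure.prod_apply hS]
  refine lintegral_congr fun x => ?_
  congr 1
  ext y
  simp only [mem_preimage, mem_Ioi]
  constructor <;> intro <;> linarith

lemma tail_integral_bound (μF : Measure ℝ) [IsProbabilityMeasure μF]
    (μK : Measure ℝ) [IsProbabilityMeasure μK] (M : ℝ) (hM : 0 < M)
    (hK : MemB (fun t => (μF (Set.Iic t)).toReal) M μK)
    (hsub : Filter.Tendsto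
      (fun t => ((Measure.map (fun p : ℝ × ℝ => p.1 + p.2) (μF.prod μF)) (Set.Ioi t)).toReal
        / (μF (Set.Ioi t)).toReal) Filter.atTop (nhds 2))
    (hFpos : ∀ᶠ t in atTop, 0 < (μF (Set.Ioi t)).toReal) :
    ∀ᶠ t in atTop, ∫ x in Iic (t/2), (μF (Ioi (t - x))).toReal ∂μK
       ≤ (3*M+1) * (μF (Ioi t)).toReal := by
  set ν := Measure.map (fun p : ℝ × ℝ => p.1 + p.2) (μF.prod μF) with hν
  have hadd : Measurable fun p : ℝ × ℝ => p.1 + p.2 := measurable_fst.add measurable_snd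
  have hνprob : IsProbabilityMeasure ν := Measure.isProbabilityMeasure_map hadd.aemeasurable
  have hrat : ∀ᶠ t in atTop, (ν (Ioi t)).toReal / (μF (Ioi t)).toReal < 3 :=
    hsub.eventually_lt_const (by norm_num)
  filter_upwards [hrat, hFpos, eventually_ge_atTop 0] with t hrt hFp ht0
  have hνle : ν (Ioi t) ≤ ENNReal.ofReal (3 * (μF (Ioi t)).toReal) := by
    have h1 : (ν (Ioi t)).toReal < 3 * (μF (Ioi t)).toReal := by
      rw [div_lt_iff₀ hFp] at hrt
      linarith
    rw [← ENNReal.ofReal_toReal (measure_ne_top ν (Ioi t))]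
    exact ENNReal.ofReal_le_ofReal h1.le
  -- measurability
  have hmF : Measurable fun y : ℝ => μF (Ioi (t - y)) :=
    (meas_tail μF).comp (measurable_const.sub measurable_id)
  -- Tonelli
  have hSmeas : MeasurableSet {p : ℝ × ℝ | t < p.1 + p.2} := by
    have : {p : ℝ × ℝ | t < p.1 + p.2} = (fun p : ℝ × ℝ => p.1 + p.2) ⁻¹' Ioi t := rfl
    rw [this]
    exact hadd measurableSet_Ioi
  have key1 : ∫⁻ x in Iic (t/2), μF (Ioi (t - x)) ∂μK
      = ∫⁻ y, μK (Ioi (t - y) ∩ Iic (t/2)) ∂μF := by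
    have e1 : ∫⁻ x in Iic (t/2), μF (Ioi (t - x)) ∂μK
        = ((μK.restrict (Iic (t/2))).prod μF) {p : ℝ × ℝ | t < p.1 + p.2} := by
      rw [Measure.prod_apply hSmeas]
      refine lintegral_congr fun x => ?_
      congr 1
      ext y
      simp only [mem_preimage, mem_Ioi, mem_setOf_eq]
      constructor <;> intro <;> linarith
    have e2 : ((μK.restrict (Iic (t/2))).prod μF) {p : ℝ × ℝ | t < p.1 + p.2}
        = ∫⁻ y, μK (Ioi (t - y) ∩ Iic (t/2)) ∂μF := by
      rw [Measure.prod_apply_symm hSmeas]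
      refine lintegral_congr fun y => ?_
      rw [Measure.restrict_apply' measurableSet_Iic]
      congr 1
      ext x
      simp only [mem_preimage, mem_Ioi, mem_setOf_eq, mem_inter_iff, mem_Iic]
      constructor <;> intro hh <;> exact ⟨by linarith [hh.1], hh.2⟩
    rw [e1, e2]
  -- pointwise bound
  have hbound : ∀ y : ℝ, μK (Ioi (t - y) ∩ Iic (t/2)) ≤
      (Ioc (t/2) t).indicator (fun y => ENNReal.ofReal M * μF (Ioi (t - y))) y
      + (Ioi t).indicator (fun _ => 1) y := by
    intro y
    by_cases h1 : y ≤ t/2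
    · have hempty : Ioi (t - y) ∩ Iic (t/2) = (∅ : Set ℝ) := by
        ext x
        simp only [mem_inter_iff, mem_Ioi, mem_Iic, mem_empty_iff_false, iff_false, not_and,
          not_le]
        intro hx
        linarith
      rw [hempty, measure_empty]
      exact zero_le
    · push_neg at h1
      by_cases h2 : y ≤ t
      · rw [indicator_of_mem (show y ∈ Ioc (t/2) t from ⟨h1, h2⟩),
          indicator_of_notMem (show y ∉ Ioi t by simp only [mem_Ioi, not_lt]; exact h2),
          add_zero]
        have hKb : μK (Ioi (t - y)) ≤ ENNReal.ofReal M * μF (Ioi (t - y)) := by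
          have hb := (hK (t - y) (by linarith)).1
          rw [← tail_eq μF (t - y)] at hb
          rw [← ENNReal.ofReal_toReal (measure_ne_top μK (Ioi (t - y))),
            ← ENNReal.ofReal_toReal (measure_ne_top μF (Ioi (t - y))),
            ← ENNReal.ofReal_mul hM.le]
          exact ENNReal.ofReal_le_ofReal hb
        exact (measure_mono inter_subset_left).trans hKb
      · push_neg at h2
        rw [indicator_of_mem (mem_Ioi.mpr h2)]
        have h3 : μK (Ioi (t - y) ∩ Iic (t/2)) ≤ 1 := prob_le_one
        exact h3.trans le_add_self
  -- integrate the bound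
  have hmono := lintegral_mono (μ := μF) hbound
  have hsplit : ∫⁻ y, ((Ioc (t/2) t).indicator (fun y => ENNReal.ofReal M * μF (Ioi (t - y))) y
      + (Ioi t).indicator (fun _ => 1) y) ∂μF
      ≤ ENNReal.ofReal ((3*M+1) * (μF (Ioi t)).toReal) := by
    rw [lintegral_add_left ((hmF.const_mul (ENNReal.ofReal M)).indicator measurableSet_Ioc)]
    have hA : ∫⁻ y, (Ioc (t/2) t).indicator
        (fun y => ENNReal.ofReal M * μF (Ioi (t - y))) y ∂μF
        ≤ ENNReal.ofReal M * ENNReal.ofReal (3 * (μF (Ioi t)).toReal) := by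
      rw [lintegral_indicator measurableSet_Ioc]
      calc ∫⁻ y in Ioc (t/2) t, ENNReal.ofReal M * μF (Ioi (t - y)) ∂μF
          ≤ ∫⁻ y, ENNReal.ofReal M * μF (Ioi (t - y)) ∂μF :=
            setLIntegral_le_lintegral _ _
      _ = ENNReal.ofReal M * ∫⁻ y, μF (Ioi (t - y)) ∂μF := lintegral_const_mul _ hmF
      _ = ENNReal.ofReal M * ν (Ioi t) := by rw [← tail_conv_eq μF t]
      _ ≤ ENNReal.ofReal M * ENNReal.ofReal (3 * (μF (Ioi t)).toReal) :=
            mul_le_mul' le_rfl hνle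
    have hB : ∫⁻ y, (Ioi t).indicator (fun _ => (1:ℝ≥0∞)) y ∂μF = μF (Ioi t) := by
      rw [lintegral_indicator measurableSet_Ioi]
      simp
    calc _ ≤ ENNReal.ofReal M * ENNReal.ofReal (3 * (μF (Ioi t)).toReal) + μF (Ioi t) := by
          rw [hB]; exact add_le_add hA le_rfl
    _ = ENNReal.ofReal (M * (3 * (μF (Ioi t)).toReal)) + ENNReal.ofReal ((μF (Ioi t)).toReal) := by
          rw [ENNReal.ofReal_mul hM.le, ENNReal.ofReal_toReal (measure_ne_top μF _)]
    _ = ENNReal.ofReal ((3*M+1) * (μF (Ioi t)).toReal) := by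
          rw [← ENNReal.ofReal_add (by positivity) ENNReal.toReal_nonneg]
          congr 1
          ring
  have hlint : ∫⁻ x in Iic (t/2), μF (Ioi (t - x)) ∂μK
      ≤ ENNReal.ofReal ((3*M+1) * (μF (Ioi t)).toReal) := by
    rw [key1]
    exact hmono.trans hsplit
  -- to Bochner
  have hInt : ∫ x in Iic (t/2), (μF (Ioi (t - x))).toReal ∂μK
      = (∫⁻ x in Iic (t/2), μF (Ioi (t - x)) ∂μK).toReal :=
    integral_toReal (hmF.comp measurable_id).aemeasurable
      (ae_of_all _ fun x => measure_lt_top _ _)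
  rw [hInt]
  calc (∫⁻ x in Iic (t/2), μF (Ioi (t - x)) ∂μK).toReal
      ≤ (ENNReal.ofReal ((3*M+1) * (μF (Ioi t)).toReal)).toReal :=
        ENNReal.toReal_mono ENNReal.ofReal_ne_top hlint
  _ = (3*M+1) * (μF (Ioi t)).toReal := ENNReal.toReal_ofReal (by positivity)

/-- if `F` is subexponential, supported on `[0,∞)`, with regularly varying
hazard rate of negative index satisfying (BasicH), `K ∈ B(F,M)`, and `g = o(h^m F̄)`,
then `T_K g = o(h^m F̄)`. -/
theorem stmt_13 (μF : Measure ℝ) [IsProbabilityMeasure μF] (h : ℝ → ℝ) (t₀ : ℝ) (m : ℕ)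
    (hsupp : μF (Set.Iio 0) = 0)
    (hh : HasHazardRate (fun t => (μF (Set.Iic t)).toReal) h t₀)
    (hb : BasicH h) (ρ : ℝ) (hρ : ρ < 0) (hrv : RegularlyVarying h ρ)
    (hsub : Filter.Tendsto
      (fun t => ((Measure.map (fun p : ℝ × ℝ => p.1 + p.2) (μF.prod μF)) (Set.Ioi t)).toReal
        / (μF (Set.Ioi t)).toReal) Filter.atTop (nhds 2))
    (M : ℝ) (hM : 0 < M) (μK : Measure ℝ) [IsProbabilityMeasure μK]
    (hK : MemB (fun t => (μF (Set.Iic t)).toReal) M μK)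
    (g : ℝ → ℝ) (hgm : Measurable g)
    (hg : Filter.Tendsto (fun t => g t / (h t ^ m * (μF (Set.Ioi t)).toReal))
      Filter.atTop (nhds 0)) :
    Filter.Tendsto (fun t => Tops μK g t / (h t ^ m * (μF (Set.Ioi t)).toReal))
      Filter.atTop (nhds 0) := by
  classical
  -- positivity of the tail
  have hFpos : ∀ t, t₀ ≤ t → 0 < (μF (Ioi t)).toReal := by
    intro t ht
    rw [tail_eq μF t]
    rw [hh.2.2.2 t ht]
    exact mul_pos hh.1 (Real.exp_pos _)
  have hFposev : ∀ᶠ t in atTop, 0 < (μF (Set.Ioi t)).toReal := by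
    filter_upwards [eventually_ge_atTop t₀] with t ht using hFpos t ht
  -- measurable version of h
  obtain ⟨h₀, hh₀sm, hh₀ae⟩ : ∃ h₀ : ℝ → ℝ, StronglyMeasurable h₀ ∧
      volume ({x | h x ≠ h₀ x} ∩ Ici t₀) = 0 := by
    have hsm := hh.2.2.1.aestronglyMeasurable
    refine ⟨hsm.mk h, hsm.stronglyMeasurable_mk, ?_⟩
    have hae := hsm.ae_eq_mk
    rw [Filter.EventuallyEq, ae_iff] at hae
    rwa [Measure.restrict_apply' measurableSet_Ici] at hae
  obtain ⟨TP, hTP0, hTP⟩ := uct_potter h h₀ hρ hrv t₀ hh₀sm hh₀ae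
  set C : ℝ := 4 / (6:ℝ)^ρ with hCdef
  have hβ0 : (0:ℝ) < (6:ℝ)^ρ := Real.rpow_pos_of_pos (by norm_num) ρ
  have hβ1 : (6:ℝ)^ρ ≤ 1 := Real.rpow_le_one_of_one_le_of_nonpos (by norm_num) hρ.le
  have hC1 : (1:ℝ) ≤ C := by rw [hCdef, le_div_iff₀ hβ0]; linarith
  have hC0 : (0:ℝ) < C := lt_of_lt_of_le one_pos hC1
  set D : ℝ := 3*M + 1 with hDdef
  have hD0 : 0 < D := by rw [hDdef]; linarith
  have hCm0 : (0:ℝ) < C^m := pow_pos hC0 m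
  have htb := tail_integral_bound μF μK M hM hK hsub hFposev
  -- main estimate
  refine Metric.tendsto_nhds.mpr fun ε hε => ?_
  simp only [Real.dist_eq, sub_zero]
  set δ : ℝ := ε / (2 * (C^m * D + 1)) with hδdef
  have hδ0 : 0 < δ := by
    rw [hδdef]
    positivity
  -- from hg
  have hgb : ∀ᶠ s in atTop, |g s| ≤ δ * (h s ^ m * (μF (Ioi s)).toReal) := by
    have h1 := Metric.tendsto_nhds.mp hg δ hδ0
    filter_upwards [h1, hrv.1, eventually_ge_atTop t₀] with s hs1 hs2 hs3
    rw [Real.dist_eq, sub_zero, abs_div] at hs1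
    have hden : 0 < h s ^ m * (μF (Ioi s)).toReal :=
      mul_pos (pow_pos hs2 m) (hFpos s hs3)
    rw [abs_of_pos hden] at hs1
    calc |g s| = |g s| / (h s ^ m * (μF (Ioi s)).toReal)
        * (h s ^ m * (μF (Ioi s)).toReal) := (div_mul_cancel₀ _ hden.ne').symm
    _ ≤ δ * (h s ^ m * (μF (Ioi s)).toReal) :=
        mul_le_mul_of_nonneg_right hs1.le hden.le
  obtain ⟨T₁, hT₁⟩ := eventually_atTop.1 hgb
  filter_upwards [htb, eventually_ge_atTop (2*T₁), eventually_ge_atTop TP,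
    eventually_ge_atTop (2*t₀), hrv.1, eventually_ge_atTop t₀] with t htb' ht1 ht2 ht3 hht hht0
  have hFt : 0 < (μF (Ioi t)).toReal := hFpos t hht0
  have hden : 0 < h t ^ m * (μF (Ioi t)).toReal := mul_pos (pow_pos hht m) hFt
  -- pointwise bound on the integrand
  have hpt : ∀ x ∈ Iic (t/2),
      |g (t - x)| ≤ (δ * (C^m * h t ^ m)) * (μF (Ioi (t - x))).toReal := by
    intro x hx
    rw [mem_Iic] at hx
    have hs' : t/2 ≤ t - x := by linarith
    have hT1s : T₁ ≤ t - x := by linarith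
    have hhb := hT₁ _ hT1s
    have hpotter : h (t - x) ≤ C * h t := hTP t ht2 (t - x) hs'
    have hnn : 0 ≤ h (t - x) := hh.2.1 _ (by linarith)
    have hpow : h (t - x) ^ m ≤ (C * h t)^m := pow_le_pow_left₀ hnn hpotter m
    calc |g (t-x)| ≤ δ * (h (t-x)^m * (μF (Ioi (t - x))).toReal) := hhb
    _ ≤ δ * ((C*h t)^m * (μF (Ioi (t - x))).toReal) := by
        apply mul_le_mul_of_nonneg_left _ hδ0.le
        exact mul_le_mul_of_nonneg_right hpow ENNReal.toReal_nonneg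
    _ = (δ * (C^m * h t^m)) * (μF (Ioi (t - x))).toReal := by
        rw [mul_pow]
        ring
  -- integrability of the dominating function
  have hmeasd : Measurable fun x : ℝ => (μF (Ioi (t - x))).toReal :=
    ((meas_tail μF).comp (measurable_const.sub measurable_id)).ennreal_toReal
  have hdom0 : Integrable (fun x => (μF (Ioi (t - x))).toReal)
      (μK.restrict (Iic (t/2))) := by
    refine ⟨hmeasd.aestronglyMeasurable, ?_⟩
    apply HasFiniteIntegral.of_bounded (C := 1)
    refine ae_of_all _ fun x => ?_
    rw [Real.norm_eq_abs, abs_of_nonneg ENNReal.toReal_nonneg]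
    calc (μF (Ioi (t - x))).toReal ≤ (μF univ).toReal :=
          ENNReal.toReal_mono (measure_ne_top _ _) (measure_mono (subset_univ _))
    _ = 1 := by rw [measure_univ, ENNReal.toReal_one]
  have hdom : Integrable (fun x => (δ * (C^m * h t^m)) * (μF (Ioi (t - x))).toReal)
      (μK.restrict (Iic (t/2))) := hdom0.const_mul _
  -- main chain
  have hTopsb : |Tops μK g t| ≤ (δ * (C^m * h t^m)) * (D * (μF (Ioi t)).toReal) := by
    calc |Tops μK g t| ≤ ∫ x in Iic (t/2), |g (t - x)| ∂μK := by
          show |∫ x in Iic (t/2), g (t - x) ∂μK| ≤ _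
          simpa [Real.norm_eq_abs] using
            norm_integral_le_integral_norm (μ := μK.restrict (Iic (t/2))) (fun x => g (t - x))
    _ ≤ ∫ x in Iic (t/2), (δ * (C^m * h t^m)) * (μF (Ioi (t - x))).toReal ∂μK := by
        refine integral_mono_of_nonneg (ae_of_all _ fun x => abs_nonneg _) hdom ?_
        exact (ae_restrict_iff' measurableSet_Iic).2 (ae_of_all _ hpt)
    _ = (δ * (C^m * h t^m)) * ∫ x in Iic (t/2), (μF (Ioi (t - x))).toReal ∂μK :=
        integral_const_mul _ _
    _ ≤ (δ * (C^m * h t^m)) * (D * (μF (Ioi t)).toReal) := by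
        apply mul_le_mul_of_nonneg_left _ (by positivity)
        rw [hDdef]
        exact htb'
  -- conclude
  have habs : |Tops μK g t / (h t ^ m * (μF (Ioi t)).toReal)|
      = |Tops μK g t| / (h t ^ m * (μF (Ioi t)).toReal) := by
    rw [abs_div, abs_of_pos hden]
  rw [habs, div_lt_iff₀ hden]
  have hq : δ * (C^m * D) < ε := by
    rw [hδdef]
    rw [div_mul_eq_mul_div, div_lt_iff₀ (by positivity : (0:ℝ) < 2 * (C^m * D + 1))]
    nlinarith [mul_pos hCm0 hD0]
  calc |Tops μK g t| ≤ (δ * (C^m * h t^m)) * (D * (μF (Ioi t)).toReal) := hTopsb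
  _ = (δ * (C^m * D)) * (h t ^ m * (μF (Ioi t)).toReal) := by ring
  _ < ε * (h t ^ m * (μF (Ioi t)).toReal) := by
      exact mul_lt_mul_of_pos_right hq hden
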